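/- The product numerical range Λ⊗(X) of an operator X on C^K ⊗ C^M reduces to a single point λ if and only if X = λ·I. -/

import Mathlib

open Matrix Complex Kronecker Pointwise

/-- The Kronecker (tensor) product of two vectors. -/
def prodVec {K M : ℕ} (x : Fin K → ℂ) (y : Fin M → ℂ) : Fin K × Fin M → ℂ :=
  fun p => x p.1 * y p.2

/-- The product numerical range of an operator on `ℂ^K ⊗ ℂ^M`. -/
def pnr {K M : ℕ} (X : Matrix (Fin K × Fin M) (Fin K × Fin M) ℂ) : Set ℂ :=
  {z | ∃ (x : Fin K → ℂ) (y : Fin M → ℂ),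
    star x ⬝ᵥ x = 1 ∧ star y ⬝ᵥ y = 1 ∧
    star (prodVec x y) ⬝ᵥ X.mulVec (prodVec x y) = z}

/-- The numerical range of an operator on `ℂ^N`. -/
def nr {N : ℕ} (A : Matrix (Fin N) (Fin N) ℂ) : Set ℂ :=
  {z | ∃ x : Fin N → ℂ, star x ⬝ᵥ x = 1 ∧ star x ⬝ᵥ A.mulVec x = z}

lemma prodVec_add_left {K M : ℕ} (x x' : Fin K → ℂ) (y : Fin M → ℂ) :
    prodVec (x + x') y = prodVec x y + prodVec x' y := by
  funext p; simp [prodVec]; ring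

lemma prodVec_add_right {K M : ℕ} (x : Fin K → ℂ) (y y' : Fin M → ℂ) :
    prodVec x (y + y') = prodVec x y + prodVec x y' := by
  funext p; simp [prodVec]; ring

lemma prodVec_smul_left {K M : ℕ} (c : ℂ) (x : Fin K → ℂ) (y : Fin M → ℂ) :
    prodVec (c • x) y = c • prodVec x y := by
  funext p; simp [prodVec]; ring

lemma prodVec_smul_right {K M : ℕ} (c : ℂ) (x : Fin K → ℂ) (y : Fin M → ℂ) :
    prodVec x (c • y) = c • prodVec x y := by
  funext p; simp [prodVec]; ring

lemma star_prodVec {K M : ℕ} (x : Fin K → ℂ) (y : Fin M → ℂ) :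
    star (prodVec x y) = prodVec (star x) (star y) := by
  funext p; simp [prodVec]

lemma prodVec_dot {K M : ℕ} (x x' : Fin K → ℂ) (y y' : Fin M → ℂ) :
    prodVec x y ⬝ᵥ prodVec x' y' = (x ⬝ᵥ x') * (y ⬝ᵥ y') := by
  simp only [dotProduct, prodVec, Finset.sum_mul_sum, Fintype.sum_prod_type]
  exact Finset.sum_congr rfl fun i _ => Finset.sum_congr rfl fun j _ => by ring

lemma polarization {V : Type*} [AddCommGroup V] [Module ℂ V] (B : V → V → ℂ)
    (hal : ∀ u v w, B (u + v) w = B u w + B v w)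
    (har : ∀ u v w, B u (v + w) = B u v + B u w)
    (hsl : ∀ (c : ℂ) u v, B (c • u) v = (starRingEnd ℂ) c * B u v)
    (hsr : ∀ (c : ℂ) u v, B u (c • v) = c * B u v)
    (hd : ∀ v, B v v = 0) (u v : V) : B u v = 0 := by
  have e1 : B u v + B v u = 0 := by
    have h := hd (u + v)
    simp only [hal, har, hd, zero_add, add_zero] at h
    linear_combination h
  have e2 : Complex.I * B u v - Complex.I * B v u = 0 := by
    have h := hd (u + Complex.I • v)
    simp only [hal, har, hsl, hsr, hd, Complex.conj_I, mul_zero, zero_add, add_zero] at h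
    linear_combination h
  linear_combination (1/2) * e1 - (Complex.I/2) * e2 +
    ((B u v - B v u)/2) * Complex.I_mul_I

/-- a nonzero vector is a scalar multiple of a unit vector -/
lemma exists_unit {n : ℕ} (x : Fin n → ℂ) (hx : x ≠ 0) :
    ∃ (c : ℂ) (u : Fin n → ℂ), star u ⬝ᵥ u = 1 ∧ x = c • u := by
  have hs : star x ⬝ᵥ x = ((∑ i, Complex.normSq (x i) : ℝ) : ℂ) := by
    simp only [dotProduct, Pi.star_apply, Complex.star_def]
    push_cast
    exact Finset.sum_congr rfl fun i _ => by
      rw [← Complex.normSq_eq_conj_mul_self]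
  set s : ℝ := ∑ i, Complex.normSq (x i) with hsdef
  have hs0 : s ≠ 0 := by
    intro h
    apply hx
    funext i
    have hi : Complex.normSq (x i) = 0 :=
      (Finset.sum_eq_zero_iff_of_nonneg
        (fun j _ => Complex.normSq_nonneg (x j))).mp h i (Finset.mem_univ i)
    exact Complex.normSq_eq_zero.mp hi
  have hsnn : 0 ≤ s := Finset.sum_nonneg fun i _ => Complex.normSq_nonneg _
  have hspos : 0 < s := lt_of_le_of_ne hsnn (Ne.symm hs0)
  set r : ℝ := Real.sqrt s with hrdef
  have hrpos : 0 < r := Real.sqrt_pos.mpr hspos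
  have hrne : (r : ℂ) ≠ 0 := by exact_mod_cast hrpos.ne'
  refine ⟨(r : ℂ), (r : ℂ)⁻¹ • x, ?_, ?_⟩
  · have : star ((r : ℂ)⁻¹ • x) ⬝ᵥ ((r : ℂ)⁻¹ • x)
        = (starRingEnd ℂ) (r : ℂ)⁻¹ * ((r : ℂ)⁻¹ * (star x ⬝ᵥ x)) := by
      rw [star_smul, smul_dotProduct, dotProduct_smul]
      simp [smul_eq_mul, mul_assoc]
    rw [this, hs]
    have hconj : (starRingEnd ℂ) ((r : ℂ)⁻¹) = (r : ℂ)⁻¹ := by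
      simp [Complex.conj_inv]
    rw [hconj]
    field_simp
    rw [← Complex.ofReal_pow, hrdef, Real.sq_sqrt hsnn]
  · rw [smul_smul, mul_inv_cancel₀ hrne, one_smul]

lemma star_single_one {n : Type*} [DecidableEq n] (i : n) :
    star (Pi.single i (1 : ℂ)) = (Pi.single i 1 : n → ℂ) := by
  funext j
  by_cases h : j = i <;> simp [Pi.single_apply, h]

lemma prodVec_single {K M : ℕ} (i : Fin K) (j : Fin M) :
    prodVec (Pi.single i (1 : ℂ)) (Pi.single j 1) = Pi.single (i, j) 1 := by
  funext p
  obtain ⟨a, b⟩ := p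
  by_cases h1 : a = i <;> by_cases h2 : b = j <;>
    simp [prodVec, Pi.single_apply, Prod.ext_iff, h1, h2]

theorem pnr_singleton_iff {K M : ℕ} (hK : 0 < K) (hM : 0 < M)
    (X : Matrix (Fin K × Fin M) (Fin K × Fin M) ℂ) (lam : ℂ) :
    pnr X = {lam} ↔ X = lam • (1 : Matrix (Fin K × Fin M) (Fin K × Fin M) ℂ) := by
  constructor
  · intro h
    set Y : Matrix (Fin K × Fin M) (Fin K × Fin M) ℂ := X - lam • 1 with hYdef
    have hunit : ∀ (x : Fin K → ℂ) (y : Fin M → ℂ), star x ⬝ᵥ x = 1 → star y ⬝ᵥ y = 1 →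
        star (prodVec x y) ⬝ᵥ Y.mulVec (prodVec x y) = 0 := by
      intro x y hx hy
      have hz : star (prodVec x y) ⬝ᵥ X.mulVec (prodVec x y) ∈ pnr X := ⟨x, y, hx, hy, rfl⟩
      rw [h, Set.mem_singleton_iff] at hz
      have hpp : star (prodVec x y) ⬝ᵥ prodVec x y = 1 := by
        rw [star_prodVec, prodVec_dot, hx, hy, one_mul]
      rw [hYdef, Matrix.sub_mulVec, dotProduct_sub, hz,
        Matrix.smul_mulVec, Matrix.one_mulVec, dotProduct_smul,
        smul_eq_mul, hpp, mul_one, sub_self]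
    have hq : ∀ (x : Fin K → ℂ) (y : Fin M → ℂ),
        star (prodVec x y) ⬝ᵥ Y.mulVec (prodVec x y) = 0 := by
      intro x y
      by_cases hx0 : x = 0
      · have : prodVec x y = 0 := by subst hx0; funext p; simp [prodVec]
        simp [this]
      by_cases hy0 : y = 0
      · have : prodVec x y = 0 := by subst hy0; funext p; simp [prodVec]
        simp [this]
      obtain ⟨c, u, hu, rfl⟩ := exists_unit x hx0
      obtain ⟨d, v, hv, rfl⟩ := exists_unit y hy0
      rw [prodVec_smul_left, prodVec_smul_right, smul_comm, smul_smul, star_smul,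
        smul_dotProduct, Matrix.mulVec_smul, dotProduct_smul]
      simp [hunit u v hu hv]
    have step1 : ∀ (y : Fin M → ℂ) (x x' : Fin K → ℂ),
        star (prodVec x y) ⬝ᵥ Y.mulVec (prodVec x' y) = 0 := by
      intro y
      apply polarization (fun x x' => star (prodVec x y) ⬝ᵥ Y.mulVec (prodVec x' y))
      · intro a b w
        simp [prodVec_add_left, add_dotProduct]
      · intro a b w
        simp [prodVec_add_left, Matrix.mulVec_add, dotProduct_add]
      · intro c a b
        simp [prodVec_smul_left, smul_dotProduct, Complex.star_def]
      · intro c a b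
        simp [prodVec_smul_left, Matrix.mulVec_smul, dotProduct_smul]
      · intro a
        exact hq a y
    have hgen : ∀ (x x' : Fin K → ℂ) (y y' : Fin M → ℂ),
        star (prodVec x y) ⬝ᵥ Y.mulVec (prodVec x' y') = 0 := by
      intro x x'
      apply polarization (fun y y' => star (prodVec x y) ⬝ᵥ Y.mulVec (prodVec x' y'))
      · intro a b w
        simp [prodVec_add_right, add_dotProduct]
      · intro a b w
        simp [prodVec_add_right, Matrix.mulVec_add, dotProduct_add]
      · intro c a b
        simp [prodVec_smul_right, smul_dotProduct, Complex.star_def]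
      · intro c a b
        simp [prodVec_smul_right, Matrix.mulVec_smul, dotProduct_smul]
      · intro a
        exact step1 a x x'
    have hY : Y = 0 := by
      ext a b
      have h0 := hgen (Pi.single a.1 1) (Pi.single b.1 1) (Pi.single a.2 1) (Pi.single b.2 1)
      rw [prodVec_single, prodVec_single, Prod.mk.eta, Prod.mk.eta, star_single_one,
        single_dotProduct, one_mul, Matrix.mulVec_single] at h0
      simpa using h0
    have := sub_eq_zero.mp hY
    rw [← this]
  · intro h
    subst h
    ext z
    simp only [pnr, Set.mem_setOf_eq, Set.mem_singleton_iff]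
    constructor
    · rintro ⟨x, y, hx, hy, rfl⟩
      rw [Matrix.smul_mulVec, Matrix.one_mulVec, dotProduct_smul,
        smul_eq_mul, star_prodVec, prodVec_dot, hx, hy, one_mul, mul_one]
    · rintro rfl
      refine ⟨Pi.single ⟨0, hK⟩ 1, Pi.single ⟨0, hM⟩ 1, ?_, ?_, ?_⟩
      · rw [star_single_one, single_dotProduct, Pi.single_eq_same, mul_one]
      · rw [star_single_one, single_dotProduct, Pi.single_eq_same, mul_one]
      · rw [Matrix.smul_mulVec, Matrix.one_mulVec, dotProduct_smul,
          smul_eq_mul, star_prodVec, prodVec_dot, star_single_one, star_single_one,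
          single_dotProduct, single_dotProduct, Pi.single_eq_same,
          Pi.single_eq_same]
        ring
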